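/- arXiv:1201.5853 — 5 statements merged into one kernel-verified Lean document; each statement's English description precedes it below -/
import Mathlib

section
/- Every permutation α of {1,…,d} admits an alternated factorization: α can be written as a product of transpositions (d u₁)(u₁ u₂)⋯(u_{k-1} u_k) in which each consecutive pair of transpositions shares exactly one element, i.e., for every i the elements u_i, u_{i+1}, u_{i+2} are pairwise distinct (with the first transposition containing d). -/
open Equiv List

variable {X : Type*} [DecidableEq X]

/-- Product of swaps along a chain. -/
def prodChain : List X → Equiv.Perm X
  | [] => 1
  | [_] => 1
  | a :: b :: l => Equiv.swap a b * prodChain (b :: l)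

/-- Good chain: adjacent entries distinct and entries at distance 2 distinct. -/
def Good : List X → Prop
  | [] => True
  | [_] => True
  | a :: b :: l => a ≠ b ∧ (∀ c ∈ l.head?, a ≠ c) ∧ Good (b :: l)

lemma good_cons {a : X} {l : List X} :
    Good (a :: l) ↔ (∀ b ∈ l.head?, a ≠ b) ∧ (∀ c ∈ l.tail.head?, a ≠ c) ∧ Good l := by
  cases l with
  | nil => simp [Good]
  | cons b l' => simp [Good]

lemma prodChain_eq_zip : ∀ l : List X,
    prodChain l = ((l.zip l.tail).map fun p => Equiv.swap p.1 p.2).prod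
  | [] => by simp [prodChain]
  | [a] => by simp [prodChain]
  | a :: b :: l => by
    rw [prodChain]
    simp only [List.tail_cons, List.zip_cons_cons, List.map_cons, List.prod_cons]
    rw [prodChain_eq_zip (b :: l)]
    simp

lemma prodChain_split : ∀ (l1 : List X) (x : X) (l2 : List X),
    prodChain (l1 ++ x :: l2) = prodChain (l1 ++ [x]) * prodChain (x :: l2)
  | [], x, l2 => by simp [prodChain]
  | [a], x, l2 => by simp [prodChain]
  | a :: b :: l1, x, l2 => by
    have := prodChain_split (b :: l1) x l2
    simp only [List.cons_append] at *
    rw [prodChain, prodChain, this, mul_assoc]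

lemma prodChain_reverse : ∀ l : List X, prodChain l.reverse = (prodChain l)⁻¹
  | [] => by simp [prodChain]
  | [a] => by simp [prodChain]
  | a :: b :: l => by
    have h1 : (a :: b :: l).reverse = l.reverse ++ b :: [a] := by simp
    rw [h1, prodChain_split, prodChain]
    have h2 : l.reverse ++ [b] = (b :: l).reverse := by simp
    rw [h2, prodChain_reverse (b :: l), prodChain, prodChain]
    rw [mul_inv_rev]
    simp [Equiv.swap_comm a b]

lemma swap3 {h x y : X} (hhx : h ≠ x) (hhy : h ≠ y) (hxy : x ≠ y) :
    Equiv.swap h x * Equiv.swap x y * Equiv.swap y h = Equiv.swap x y := by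
  ext t
  simp only [Equiv.Perm.mul_apply, Equiv.swap_apply_def]
  split_ifs <;> simp_all

lemma good_tail {a : X} {l : List X} (h : Good (a :: l)) : Good l :=
  (good_cons.1 h).2.2

lemma get_congr (l : List X) {i j : ℕ} (hi : i < l.length) (hj : j < l.length)
    (hij : i = j) : l.get ⟨i, hi⟩ = l.get ⟨j, hj⟩ := by subst hij; rfl

lemma good_get : ∀ (l : List X), Good l → ∀ (i : ℕ) (h : i + 2 < l.length),
    l.get ⟨i, by omega⟩ ≠ l.get ⟨i + 2, h⟩
  | [], _, i, h => by simp at h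
  | [a], _, i, h => by simp at h
  | a :: b :: l, hg, i, h => by
    match i with
    | 0 =>
      cases l with
      | nil => simp at h
      | cons c l' =>
        have := (good_cons.1 hg).2.1
        simpa using this c (by simp)
    | Nat.succ i =>
      have hlen : i + 2 < (b :: l).length := by
        simp only [List.length_cons] at h ⊢; omega
      have := good_get (b :: l) (good_tail hg) i hlen
      simpa using this

lemma good_chain' : ∀ (l : List X), Good l → List.Chain' (· ≠ ·) l
  | [] , _ => by simp [List.Chain']
  | [a], _ => by simp [List.Chain']
  | a :: b :: l, hg => by
    rw [List.Chain', List.isChain_cons_cons]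
    exact ⟨(good_cons.1 hg).1 b (by simp), good_chain' (b :: l) (good_tail hg)⟩

lemma good_of_get : ∀ (l : List X),
    (∀ (i : ℕ) (h : i + 1 < l.length), l.get ⟨i, by omega⟩ ≠ l.get ⟨i + 1, h⟩) →
    (∀ (i : ℕ) (h : i + 2 < l.length), l.get ⟨i, by omega⟩ ≠ l.get ⟨i + 2, h⟩) →
    Good l
  | [], _, _ => trivial
  | [a], _, _ => trivial
  | a :: b :: l, h1, h2 => by
    refine ⟨by simpa using h1 0 (by simp), ?_, ?_⟩
    · intro c hc
      cases l with
      | nil => simp at hc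
      | cons c' l' =>
        simp only [List.head?_cons, Option.mem_def, Option.some.injEq] at hc
        subst hc
        simpa using h2 0 (by simp)
    · exact good_of_get (b :: l)
        (fun i h => by
          have hl : i + 1 + 1 < (a :: b :: l).length := by
            simp only [List.length_cons] at h ⊢; omega
          simpa using h1 (i+1) hl)
        (fun i h => by
          have hl : i + 1 + 2 < (a :: b :: l).length := by
            simp only [List.length_cons] at h ⊢; omega
          simpa using h2 (i+1) hl)

lemma good_reverse {l : List X} (hg : Good l) : Good l.reverse := by
  have hcg := good_chain' l hg
  replace hcg : ∀ (i : ℕ) (h : i + 1 < l.length), l.get ⟨i, by omega⟩ ≠ l.get ⟨i + 1, h⟩ := fun i h => by simpa using List.isChain_iff_getElem.1 hcg i h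
  apply good_of_get
  · intro i h
    simp only [List.length_reverse] at h
    have e1 : l.reverse.get ⟨i, by simp; omega⟩ = l.get ⟨l.length - 1 - i, by omega⟩ := by
      simp [List.get_eq_getElem, List.getElem_reverse]
    have e2 : l.reverse.get ⟨i+1, by simp; omega⟩ = l.get ⟨l.length - 1 - (i+1), by omega⟩ := by
      simp [List.get_eq_getElem, List.getElem_reverse]
    rw [e1, e2]
    have key := hcg (l.length - 2 - i) (by omega)
    intro hEq
    apply key
    rw [get_congr l _ _ (show l.length - 2 - i = l.length - 1 - (i+1) by omega),
        get_congr l _ _ (show l.length - 2 - i + 1 = l.length - 1 - i by omega)]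
    exact hEq.symm
  · intro i h
    simp only [List.length_reverse] at h
    have e1 : l.reverse.get ⟨i, by simp; omega⟩ = l.get ⟨l.length - 1 - i, by omega⟩ := by
      simp [List.get_eq_getElem, List.getElem_reverse]
    have e2 : l.reverse.get ⟨i+2, by simp; omega⟩ = l.get ⟨l.length - 1 - (i+2), by omega⟩ := by
      simp [List.get_eq_getElem, List.getElem_reverse]
    rw [e1, e2]
    have key := good_get l hg (l.length - 3 - i) (by omega)
    intro hEq
    apply key
    rw [get_congr l _ _ (show l.length - 3 - i = l.length - 1 - (i+2) by omega),
        get_congr l _ _ (show l.length - 3 - i + 2 = l.length - 1 - i by omega)]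
    exact hEq.symm


lemma forall_head?_cons {a z : X} {l : List X} (h : a ≠ z) :
    ∀ c ∈ (z :: l).head?, a ≠ c := by
  intro c hc
  simp only [List.head?_cons, Option.mem_def, Option.some.injEq] at hc
  exact hc ▸ h

set_option maxHeartbeats 1000000 in
lemma main {d : ℕ} (D : Fin d) (β : Equiv.Perm (Fin d)) :
    ∃ c : List (Fin d), Good (c ++ [D]) ∧ prodChain (c ++ [D]) = β := by
  refine Equiv.Perm.swap_induction_on β ⟨[], by simp [Good], by simp [prodChain]⟩
    fun f x y hxy ih => ?_
  obtain ⟨c, hg, hp⟩ := ih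
  cases c with
  | nil =>
    simp only [List.nil_append, prodChain] at hp
    by_cases hx : x = D
    · subst hx
      refine ⟨[y], ⟨fun e => hxy e.symm, by simp, trivial⟩, ?_⟩
      show Equiv.swap y x * prodChain [x] = _
      rw [prodChain, hp, Equiv.swap_comm]
    · by_cases hy : y = D
      · subst hy
        refine ⟨[x], ⟨hx, by simp, trivial⟩, ?_⟩
        show Equiv.swap x y * prodChain [y] = _
        rw [prodChain, hp]
      · refine ⟨[D, x, y], ?_, ?_⟩
        · exact ⟨fun e => hx e.symm, forall_head?_cons fun e => hy e.symm,
            hxy, forall_head?_cons fun e => hx e, fun e => hy e, by simp, trivial⟩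
        · show Equiv.swap D x * (Equiv.swap x y * (Equiv.swap y D * prodChain [D])) = _
          rw [prodChain, hp]
          conv_rhs => rw [← swap3 (fun e => hx e.symm) (fun e => hy e.symm) hxy]
          simp only [mul_assoc]
  | cons h t =>
    obtain ⟨q, rest, hqr⟩ : ∃ q rest, t ++ [D] = q :: rest := by
      cases t with
      | nil => exact ⟨D, [], rfl⟩
      | cons a t' => exact ⟨a, t' ++ [D], rfl⟩
    have hfull : (h :: t) ++ [D] = h :: q :: rest := by simp [hqr]
    rw [hfull] at hg hp
    obtain ⟨hhq, hh2, hgrest⟩ : h ≠ q ∧ (∀ c ∈ rest.head?, h ≠ c) ∧ Good (q :: rest) := hg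
    rw [prodChain] at hp
    by_cases hhx : h = x
    · subst hhx
      by_cases hyq : y = q
      · refine ⟨t, by rw [hqr]; exact hgrest, ?_⟩
        rw [hyq, hqr, ← hp, ← mul_assoc, Equiv.swap_mul_self, one_mul]
      · refine ⟨y :: h :: t, ?_, ?_⟩
        · rw [show (y :: h :: t) ++ [D] = y :: h :: q :: rest by simp [hqr]]
          exact ⟨fun e => hxy e.symm, forall_head?_cons fun e => hyq e,
            hhq, hh2, hgrest⟩
        · rw [show (y :: h :: t) ++ [D] = y :: h :: q :: rest by simp [hqr]]
          rw [prodChain, prodChain, hp, Equiv.swap_comm]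
    · by_cases hhy : h = y
      · subst hhy
        by_cases hxq : x = q
        · refine ⟨t, by rw [hqr]; exact hgrest, ?_⟩
          rw [hxq, Equiv.swap_comm, hqr, ← hp, ← mul_assoc, Equiv.swap_mul_self, one_mul]
        · refine ⟨x :: h :: t, ?_, ?_⟩
          · rw [show (x :: h :: t) ++ [D] = x :: h :: q :: rest by simp [hqr]]
            exact ⟨hxy, forall_head?_cons fun e => hxq e, hhq, hh2, hgrest⟩
          · rw [show (x :: h :: t) ++ [D] = x :: h :: q :: rest by simp [hqr]]
            rw [prodChain, prodChain, hp]
      · by_cases hyq : y = q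
        · refine ⟨h :: y :: x :: h :: t, ?_, ?_⟩
          · rw [show (h :: y :: x :: h :: t) ++ [D] = h :: y :: x :: h :: q :: rest
              by simp [hqr]]
            exact ⟨fun e => hhy e, forall_head?_cons fun e => hhx e,
              fun e => hxy e.symm, forall_head?_cons fun e => hhy e.symm,
              fun e => hhx e.symm, forall_head?_cons fun e => hxy (e.trans hyq.symm),
              hhq, hh2, hgrest⟩
          · rw [show (h :: y :: x :: h :: t) ++ [D] = h :: y :: x :: h :: q :: rest
              by simp [hqr]]
            rw [prodChain, prodChain, prodChain, prodChain, hp]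
            conv_rhs => rw [show Equiv.swap x y = Equiv.swap h y * Equiv.swap y x * Equiv.swap x h
              by rw [swap3 (fun e => hhy e) (fun e => hhx e) fun e => hxy e.symm,
                     Equiv.swap_comm]]
            simp only [mul_assoc]
        · refine ⟨h :: x :: y :: h :: t, ?_, ?_⟩
          · rw [show (h :: x :: y :: h :: t) ++ [D] = h :: x :: y :: h :: q :: rest
              by simp [hqr]]
            exact ⟨fun e => hhx e, forall_head?_cons fun e => hhy e,
              hxy, forall_head?_cons fun e => hhx e.symm,
              fun e => hhy e.symm, forall_head?_cons fun e => hyq e,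
              hhq, hh2, hgrest⟩
          · rw [show (h :: x :: y :: h :: t) ++ [D] = h :: x :: y :: h :: q :: rest
              by simp [hqr]]
            rw [prodChain, prodChain, prodChain, prodChain, hp]
            conv_rhs => rw [← swap3 (fun e => hhx e) (fun e => hhy e) hxy]
            simp only [mul_assoc]

/-- Every permutation α of {1,…,d} admits an alternated factorization
α = (d u₁)(u₁ u₂)⋯(u_{k-1} u_k): consecutive transpositions share their middle element
(encoded by zipping the chain d :: u with u) and any two indices at distance ≤ 2 in the
chain are distinct. -/
theorem stmt6 (d : ℕ) (hd : 0 < d) (α : Equiv.Perm (Fin d)) :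
    ∃ u : List (Fin d),
      α = ((((⟨d - 1, by omega⟩ : Fin d) :: u).zip u).map
            fun p => Equiv.swap p.1 p.2).prod ∧
      List.Chain' (· ≠ ·) ((⟨d - 1, by omega⟩ : Fin d) :: u) ∧
      ∀ (i : ℕ) (h : i + 2 < ((⟨d - 1, by omega⟩ : Fin d) :: u).length),
        ((⟨d - 1, by omega⟩ : Fin d) :: u).get ⟨i, by omega⟩ ≠
        ((⟨d - 1, by omega⟩ : Fin d) :: u).get ⟨i + 2, h⟩ := by
  set D : Fin d := ⟨d - 1, by omega⟩ with hD
  obtain ⟨c, hg, hp⟩ := main D α⁻¹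
  have hrev : (c ++ [D]).reverse = D :: c.reverse := by simp
  have hgood : Good (D :: c.reverse) := by rw [← hrev]; exact good_reverse hg
  refine ⟨c.reverse, ?_, good_chain' _ hgood, fun i h => good_get _ hgood i h⟩
  have := prodChain_reverse (c ++ [D])
  rw [hrev, hp, inv_inv] at this
  conv_lhs => rw [← this]
  rw [prodChain_eq_zip]
  rfl
end

section
/- Let x ∈ [n]^d be such that x_α is non-decreasing for a permutation α, let i ∈ {1,…,d}, and let j = α⁻¹(i). Then there exists k with j ≤ k ≤ d such that x_{α(j)} = x_{α(j+1)} = ⋯ = x_{α(k)} and either k = d or x_{α(k)} < x_{α(k+1)}; moreover for this k, the tuple obtained from x_α by composing α with the transposition (j k) and incrementing the component x_i equals the tuple (x_α) with its k-th component incremented, and this tuple is non-decreasing (assuming x_i < n). -/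
/-- Let x_α be non-decreasing, i an index, j = α⁻¹(i). There is k ≥ j with
x_{α(j)} = ⋯ = x_{α(k)}, and k = d or x_{α(k)} < x_{α(k+1)}; moreover
(x^{(i)})_{α∘(j k)} = (x_α)^{(k)} and this tuple is non-decreasing (assuming x_i < n). -/
theorem stmt9 (d n : ℕ) (x : Fin d → ℕ) (hrange : ∀ t, 1 ≤ x t ∧ x t ≤ n)
    (α : Equiv.Perm (Fin d)) (hmono : Monotone (x ∘ ⇑α)) (i : Fin d) (hx : x i < n) :
    ∃ k : Fin d, α⁻¹ i ≤ k ∧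
      (∀ m : Fin d, α⁻¹ i ≤ m → m ≤ k → x (α m) = x (α (α⁻¹ i))) ∧
      (∀ h : (k : ℕ) + 1 < d, x (α k) < x (α ⟨(k : ℕ) + 1, h⟩)) ∧
      (Function.update x i (x i + 1)) ∘ ⇑(α * Equiv.swap (α⁻¹ i) k) =
        Function.update (x ∘ ⇑α) k (x (α k) + 1) ∧
      Monotone (Function.update (x ∘ ⇑α) k (x (α k) + 1)) := by
  set j : Fin d := α⁻¹ i with hj
  have hαj : α j = i := Equiv.apply_symm_apply α i
  set S : Finset (Fin d) := Finset.univ.filter (fun m => x (α m) = x (α j)) with hS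
  have hjS : j ∈ S := by simp [hS]
  have hSne : S.Nonempty := ⟨j, hjS⟩
  set k : Fin d := S.max' hSne with hk
  have hkS : k ∈ S := S.max'_mem hSne
  have hxk : x (α k) = x (α j) := by simpa [hS] using hkS
  have hjk : j ≤ k := S.le_max' j hjS
  refine ⟨k, hjk, ?_, ?_, ?_, ?_⟩
  · intro m hjm hmk
    have h1 : x (α j) ≤ x (α m) := hmono hjm
    have h2 : x (α m) ≤ x (α k) := hmono hmk
    omega
  · intro h
    have hle : x (α k) ≤ x (α ⟨(k : ℕ) + 1, h⟩) := by
      apply hmono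
      exact Fin.le_def.mpr (Nat.le_succ _)
    rcases lt_or_eq_of_le hle with h' | h'
    · exact h'
    · exfalso
      have : (⟨(k : ℕ) + 1, h⟩ : Fin d) ∈ S := by simp [hS, ← h', hxk]
      have := S.le_max' _ this
      rw [← hk] at this
      have := Fin.le_def.mp this
      simp at this
  · funext m
    simp only [Function.comp_apply, Equiv.Perm.mul_apply]
    by_cases hmk : m = k
    · subst hmk
      rw [Equiv.swap_apply_right, hαj, Function.update_self, Function.update_self, hxk, ← hαj]
    · have hswap_ne : Equiv.swap j k m ≠ j := by
        intro h
        apply hmk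
        have := (Equiv.swap j k).injective (a₁ := m) (a₂ := k)
        rw [Equiv.swap_apply_right] at this
        exact this h
      have hαne : α (Equiv.swap j k m) ≠ i := by
        intro h
        apply hswap_ne
        rw [← hαj] at h
        exact α.injective h
      rw [Function.update_of_ne hαne, Function.update_of_ne hmk]
      by_cases hmj : m = j
      · subst hmj
        rw [Equiv.swap_apply_left]
        simp only [Function.comp_apply]
        rw [hxk]
      · rw [Equiv.swap_apply_of_ne_of_ne hmj hmk]
        rfl
  · intro a b hab
    by_cases hbk : b = k
    · subst hbk
      by_cases hak : a = k
      · subst hak; exact le_refl _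
      · rw [Function.update_of_ne hak, Function.update_self]
        exact le_trans (hmono hab) (Nat.le_succ _)
    · rw [Function.update_of_ne hbk]
      by_cases hak : a = k
      · subst hak
        rw [Function.update_self]
        have hkb : k < b := lt_of_le_of_ne hab (fun h => hbk h.symm)
        have hb : (k : ℕ) + 1 < d := lt_of_le_of_lt (Nat.succ_le_of_lt hkb) b.isLt
        have h1 : x (α k) < x (α ⟨(k : ℕ) + 1, hb⟩) := by
          have hle : x (α k) ≤ x (α ⟨(k : ℕ) + 1, hb⟩) := by
            apply hmono; exact Fin.le_def.mpr (Nat.le_succ _)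
          rcases lt_or_eq_of_le hle with h' | h'
          · exact h'
          · exfalso
            have : (⟨(k : ℕ) + 1, hb⟩ : Fin d) ∈ S := by simp [hS, ← h', hxk]
            have := S.le_max' _ this
            rw [← hk] at this
            have := Fin.le_def.mp this
            simp at this
        have h2 : x (α ⟨(k : ℕ) + 1, hb⟩) ≤ x (α b) := by
          apply hmono; exact Fin.le_def.mpr (Nat.succ_le_of_lt hkb)
        show x (α k) + 1 ≤ x (α b)
        omega
      · rw [Function.update_of_ne hak]
        exact hmono hab
end

section
/- For d ≥ 2, the mirror language Mirror_d — the set of pictures p: [n]^d → {0,1} (for any n ≥ 1) satisfying p(a) = p(a₁₂) for all a ∈ [n]^d, where a₁₂ exchanges the first two components of a — is not a recognizable d-picture language, i.e., it is not the projection of any local d-picture language. -/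
/-- The bordered picture p^♯ of a d-picture p : [n]^d → A, with border symbol `none`. -/
def bordered {A : Type} {d n : ℕ} (p : (Fin d → Fin n) → A)
    (a : Fin d → Fin (n + 2)) : Option A :=
  if h : ∀ i, 1 ≤ (a i : ℕ) ∧ (a i : ℕ) ≤ n then
    some (p fun i => ⟨(a i : ℕ) - 1, by have := h i; omega⟩)
  else none

/-- p is tiled by (Δ₁,…,Δ_d): for every j and every pair of j-adjacent cells a, b of the
bordered picture (b the successor of a along dimension j), (p^♯(a), p^♯(b)) ∈ Δ_j. -/
def Tiled {A : Type} {d n : ℕ} (Δ : Fin d → Set (Option A × Option A))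
    (p : (Fin d → Fin n) → A) : Prop :=
  ∀ (j : Fin d) (a b : Fin d → Fin (n + 2)),
    (∀ i, i ≠ j → a i = b i) → (b j : ℕ) = (a j : ℕ) + 1 →
    (bordered p a, bordered p b) ∈ Δ j

set_option maxHeartbeats 1600000 in
/-- For d ≥ 2, the mirror language Mirror_d (pictures p : [n]^d → {0,1}
with p(a) = p(a₁₂)) is not recognizable: it is not the projection, via any surjection
π : Γ → {0,1} from a finite alphabet, of any local (tiled) d-picture language. -/
theorem stmt10 (d : ℕ) (hd : 2 ≤ d) :
    ¬ ∃ (Γ : Type) (_ : Fintype Γ) (π : Γ → Bool)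
        (Δ : Fin d → Set (Option Γ × Option Γ)),
        Function.Surjective π ∧
        ∀ (n : ℕ), 1 ≤ n → ∀ p : (Fin d → Fin n) → Bool,
          ((∀ a, p a = p (a ∘ ⇑(Equiv.swap (⟨0, by omega⟩ : Fin d) ⟨1, by omega⟩))) ↔
            ∃ q : (Fin d → Fin n) → Γ, Tiled Δ q ∧ p = π ∘ q) := by
  classical
  rintro ⟨Γ, instΓ, π, Δ, hπ, H⟩
  obtain ⟨γ0, -⟩ := hπ true
  have hΓne : Nonempty Γ := ⟨γ0⟩
  have hg1 : 1 ≤ Fintype.card Γ := Fintype.card_pos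
  set g := Fintype.card Γ with hgdef
  set k := g ^ 2 + 1 with hkdef
  have hk : 1 ≤ k := by omega
  set n := 2 * k with hndef
  have hn : 1 ≤ n := by omega
  set i0 : Fin d := ⟨0, by omega⟩ with hi0def
  set i1 : Fin d := ⟨1, by omega⟩ with hi1def
  have hne : i0 ≠ i1 := by simp [hi0def, hi1def, Fin.ext_iff]
  set σ : Equiv.Perm (Fin d) := Equiv.swap i0 i1 with hσdef
  have hσ0 : σ i0 = i1 := Equiv.swap_apply_left _ _
  have hσ1 : σ i1 = i0 := Equiv.swap_apply_right _ _
  have hσσ : ∀ a : Fin d → Fin n, (a ∘ σ) ∘ σ = a := by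
    intro a; funext i
    rw [hσdef]
    simp [Function.comp, Equiv.swap_apply_self]
  have hsw0 : ∀ a : Fin d → Fin n, (a ∘ σ) i0 = a i1 := by
    intro a; simp [Function.comp, hσ0]
  have hsw1 : ∀ a : Fin d → Fin n, (a ∘ σ) i1 = a i0 := by
    intro a; simp [Function.comp, hσ1]
  -- the block B and pictures built from f : B → Bool
  set C : (Fin d → Fin n) → Prop := fun a => k ≤ (a i0 : ℕ) ∧ (a i1 : ℕ) < k with hC
  set P : ({a : Fin d → Fin n // C a} → Bool) → (Fin d → Fin n) → Bool := fun f a =>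
    if h : C a then f ⟨a, h⟩
    else if h' : C (a ∘ σ) then f ⟨a ∘ σ, h'⟩ else false with hP
  have hPval : ∀ f a (h : C a), P f a = f ⟨a, h⟩ := by
    intro f a h; simp only [hP]; rw [dif_pos h]
  have hPval2 : ∀ f a (h : C a), P f (a ∘ σ) = f ⟨a, h⟩ := by
    intro f a h
    have h1 : ¬ C (a ∘ σ) := by
      simp only [hC, hsw0, hsw1]
      omega
    have h2 : C ((a ∘ σ) ∘ σ) := by rw [hσσ]; exact h
    simp only [hP]
    rw [dif_neg h1, dif_pos h2]
    exact congrArg f (Subtype.ext (hσσ a))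
  have hPsym : ∀ f a, P f a = P f (a ∘ σ) := by
    intro f a
    by_cases h : C a
    · rw [hPval f a h, hPval2 f a h]
    · by_cases h' : C (a ∘ σ)
      · have := hPval2 f (a ∘ σ) h'
        rw [hσσ] at this
        rw [this, hPval f (a ∘ σ) h']
      · have h'' : ¬ C ((a ∘ σ) ∘ σ) := by rw [hσσ]; exact h
        simp only [hP, dif_neg h, dif_neg h', dif_neg h'']
  -- tilings for each picture
  have hQ : ∀ f : {a : Fin d → Fin n // C a} → Bool,
      ∃ q : (Fin d → Fin n) → Γ, Tiled Δ q ∧ P f = π ∘ q := by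
    intro f
    exact (H n hn (P f)).mp (fun a => hPsym f a)
  choose Q hQt hQπ using hQ
  -- interface
  set Φ : ({a : Fin d → Fin n // C a} → Bool) →
      ({c : Fin d → Fin n // (c i0 : ℕ) = k - 1} → Γ) := fun f c => Q f c.1 with hΦ
  -- pigeonhole
  have hlt : Fintype.card ({c : Fin d → Fin n // (c i0 : ℕ) = k - 1} → Γ)
      < Fintype.card ({a : Fin d → Fin n // C a} → Bool) := by
    have hg2k : g ^ 2 < 2 ^ k := by
      calc g ^ 2 < 2 ^ (g ^ 2) := Nat.lt_two_pow_self
        _ ≤ 2 ^ k := Nat.pow_le_pow_right (by norm_num) (by omega)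
    have key : g ^ (n ^ (d - 1)) < 2 ^ (k * (k * n ^ (d - 2))) := by
      have hd1 : d - 1 = (d - 2) + 1 := by omega
      have h1 : n ^ (d - 1) = 2 * k * n ^ (d - 2) := by
        rw [hd1, pow_succ, hndef]; ring
      rw [h1]
      have h2 : g ^ (2 * k * n ^ (d - 2)) = ((g ^ 2) ^ k) ^ (n ^ (d - 2)) := by
        rw [← pow_mul, ← pow_mul]
        congr 1
        ring
      have h3 : (2:ℕ) ^ (k * (k * n ^ (d - 2))) = ((2 ^ k) ^ k) ^ (n ^ (d - 2)) := by
        rw [← pow_mul, ← pow_mul]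
      rw [h2, h3]
      have hM : n ^ (d - 2) ≠ 0 := pow_ne_zero _ (by omega)
      have hk0 : k ≠ 0 := by omega
      exact Nat.pow_lt_pow_left (Nat.pow_lt_pow_left hg2k hk0) hM
    have hR2 : Fintype.card {i : Fin d // i ≠ i0 ∧ i ≠ i1} = d - 2 := by
      have e : {i : Fin d // i ≠ i0 ∧ i ≠ i1} ≃ {i : Fin d // ¬ (i = i0 ∨ i = i1)} :=
        Equiv.subtypeEquivRight (by intro i; simp [not_or])
      rw [Fintype.card_congr e, Fintype.card_subtype_compl, Fintype.card_fin]
      have : (Finset.filter (fun i => i = i0 ∨ i = i1) Finset.univ) = ({i0, i1} : Finset (Fin d)) := by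
        ext i; simp
      rw [Fintype.card_subtype, this, Finset.card_insert_of_notMem (by simp [hne]),
        Finset.card_singleton]
    have hR1 : Fintype.card {i : Fin d // i ≠ i0} = d - 1 := by
      have e : {i : Fin d // i ≠ i0} ≃ {i : Fin d // ¬ (i = i0)} :=
        Equiv.subtypeEquivRight (fun i => Iff.rfl)
      rw [Fintype.card_congr e, Fintype.card_subtype_compl, Fintype.card_subtype_eq,
        Fintype.card_fin]
    have hne' : i1 ≠ i0 := Ne.symm hne
    have hB : k * (k * n ^ (d - 2)) ≤ Fintype.card {a : Fin d → Fin n // C a} := by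
      have hcard2 : Fintype.card (Fin k × Fin k × ({i : Fin d // i ≠ i0 ∧ i ≠ i1} → Fin n))
          = k * (k * n ^ (d - 2)) := by
        simp [Fintype.card_fun, hR2]
      rw [← hcard2]
      have hinj2 : Function.Injective
          (fun (t : Fin k × Fin k × ({i : Fin d // i ≠ i0 ∧ i ≠ i1} → Fin n)) =>
            (⟨fun i => if h : i = i0 then (⟨k + (t.1 : ℕ), by have := t.1.isLt; omega⟩ : Fin n)
              else if h' : i = i1 then ⟨(t.2.1 : ℕ), by have := t.2.1.isLt; omega⟩
              else t.2.2 ⟨i, h, h'⟩, by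
                constructor
                · show k ≤ ((if h : i0 = i0 then _ else _ : Fin n) : ℕ)
                  rw [dif_pos rfl]
                  simp
                · show ((if h : i1 = i0 then _ else _ : Fin n) : ℕ) < k
                  rw [dif_neg hne', dif_pos rfl]
                  have := t.2.1.isLt
                  simp only [Fin.val_mk]
                  exact this⟩ : {a : Fin d → Fin n // C a})) := by
        rintro ⟨x, y, z⟩ ⟨x', y', z'⟩ hEq
        simp only [Subtype.mk.injEq] at hEq
        have h0' := congrFun hEq i0
        have h1' := congrFun hEq i1
        rw [dif_pos rfl, dif_pos rfl] at h0'
        rw [dif_neg hne', dif_neg hne', dif_pos rfl, dif_pos rfl] at h1'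
        have hx : x = x' := by
          have := congrArg Fin.val h0'
          simp at this
          exact Fin.ext this
        have hy : y = y' := by
          have := congrArg Fin.val h1'
          simp at this
          exact Fin.ext this
        have hz : z = z' := by
          funext w
          have hw := congrFun hEq w.1
          rw [dif_neg w.2.1, dif_neg w.2.2, dif_neg w.2.1, dif_neg w.2.2] at hw
          simpa using hw
        simp [Prod.ext_iff, hx, hy, hz]
      exact Fintype.card_le_of_injective _ hinj2
    have hH : Fintype.card {c : Fin d → Fin n // (c i0 : ℕ) = k - 1} ≤ n ^ (d - 1) := by
      have hcard3 : Fintype.card ({i : Fin d // i ≠ i0} → Fin n) = n ^ (d - 1) := by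
        simp [Fintype.card_fun, hR1]
      rw [← hcard3]
      have hinj3 : Function.Injective
          (fun (c : {c : Fin d → Fin n // (c i0 : ℕ) = k - 1}) (w : {i : Fin d // i ≠ i0}) =>
            c.1 w.1) := by
        rintro ⟨c, hc⟩ ⟨c', hc'⟩ hEq
        simp only [Subtype.mk.injEq]
        funext i
        by_cases hi : i = i0
        · subst hi; exact Fin.ext (hc.trans hc'.symm)
        · exact congrFun hEq ⟨i, hi⟩
      exact Fintype.card_le_of_injective _ hinj3
    rw [Fintype.card_fun, Fintype.card_fun, Fintype.card_bool, ← hgdef]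
    calc g ^ Fintype.card {c : Fin d → Fin n // (c i0 : ℕ) = k - 1}
        ≤ g ^ (n ^ (d - 1)) := Nat.pow_le_pow_right hg1 hH
      _ < 2 ^ (k * (k * n ^ (d - 2))) := key
      _ ≤ 2 ^ Fintype.card {a : Fin d → Fin n // C a} :=
          Nat.pow_le_pow_right (by norm_num) hB
  have hΦni : ¬ Function.Injective Φ := fun hinj =>
    absurd (Fintype.card_le_of_injective Φ hinj) (not_le.mpr hlt)
  obtain ⟨f, f', hΦeq, hff'⟩ := Function.not_injective_iff.mp hΦni
  clear hΦni hlt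
  -- combined tiling
  set q := Q f with hq
  set q' := Q f' with hq'
  have hagree : ∀ c : Fin d → Fin n, (c i0 : ℕ) = k - 1 → q c = q' c := by
    intro c hc
    exact congrFun hΦeq ⟨c, hc⟩
  set r : (Fin d → Fin n) → Γ := fun a => if (a i0 : ℕ) < k then q a else q' a with hr
  have hL1 : ∀ c : Fin d → Fin (n+2), (c i0 : ℕ) ≤ k → bordered r c = bordered q c := by
    intro c hc
    unfold bordered
    split
    · next h =>
      congr 1
      simp only [hr]
      rw [if_pos]
      show ((c i0 : ℕ) - 1) < k
      omega
    · rfl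
  have hL2 : ∀ c : Fin d → Fin (n+2), k + 1 ≤ (c i0 : ℕ) → bordered r c = bordered q' c := by
    intro c hc
    unfold bordered
    split
    · next h =>
      congr 1
      simp only [hr]
      rw [if_neg]
      show ¬ ((c i0 : ℕ) - 1) < k
      omega
    · rfl
  have hL3 : ∀ c : Fin d → Fin (n+2), (c i0 : ℕ) = k → bordered q c = bordered q' c := by
    intro c hc
    unfold bordered
    split
    · next h =>
      congr 1
      apply hagree
      show ((c i0 : ℕ) - 1) = k - 1
      omega
    · rfl
  have hrt : Tiled Δ r := by
    intro j a b hab hsucc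
    by_cases hj : j = i0
    · subst hj
      by_cases hb : (b i0 : ℕ) ≤ k
      · rw [hL1 a (by omega), hL1 b hb]
        exact hQt f i0 a b hab hsucc
      · by_cases ha : k + 1 ≤ (a i0 : ℕ)
        · rw [hL2 a ha, hL2 b (by omega)]
          exact hQt f' i0 a b hab hsucc
        · have hak : (a i0 : ℕ) = k := by omega
          rw [hL1 a (le_of_eq hak), hL3 a hak, hL2 b (by omega)]
          exact hQt f' i0 a b hab hsucc
    · have hab0 : a i0 = b i0 := hab i0 (Ne.symm hj)
      by_cases ha : (a i0 : ℕ) ≤ k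
      · rw [hL1 a ha, hL1 b (by rw [← hab0]; exact ha)]
        exact hQt f j a b hab hsucc
      · rw [hL2 a (by omega), hL2 b (by rw [← hab0]; omega)]
        exact hQt f' j a b hab hsucc
  have hmem : ∀ a : Fin d → Fin n, (π ∘ r) a = (π ∘ r) (a ∘ σ) :=
    (H n hn (π ∘ r)).mpr ⟨r, hrt, rfl⟩
  -- conclude f = f'
  apply hff'
  funext x
  obtain ⟨a, ha⟩ := x
  have ha0 : k ≤ (a i0 : ℕ) := ha.1
  have ha1 : (a i1 : ℕ) < k := ha.2
  have h3 : (π ∘ r) a = P f' a := by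
    show π (r a) = P f' a
    simp only [hr]
    rw [if_neg (by omega)]
    exact (congrFun (hQπ f') a).symm
  have h4 : (π ∘ r) (a ∘ σ) = P f (a ∘ σ) := by
    have hcond : ((a ∘ σ) i0 : ℕ) < k := by rw [hsw0]; omega
    show π (r (a ∘ σ)) = P f (a ∘ σ)
    simp only [hr]
    rw [if_pos hcond]
    exact (congrFun (hQπ f) (a ∘ σ)).symm
  have h5 := hmem a
  rw [h3, h4] at h5
  rw [hPval f' a ha, hPval2 f a ha] at h5
  exact h5.symm
end

section
/- Let x ∈ [n]^d, let α be a permutation of {1,…,d}, and suppose β = α∘(i j) arises from α along an alternated factorization whose last transposition before (i j) involved i (or α = id and i = d). Then the j-th component of x_β equals the d-th component of x, i.e., [x_{α.(i j)}]_j = [x]_d. -/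
/-- `Reaches d α i`: the permutation α of {1,…,d+1} is reached along a chain of
alternated factorizations, its last transposition having introduced the index i
(the identity is reached with the top index d+1 = Fin.last d). -/
inductive Reaches (d : ℕ) : Equiv.Perm (Fin (d + 1)) → Fin (d + 1) → Prop
  | base : Reaches d 1 (Fin.last d)
  | step {α : Equiv.Perm (Fin (d + 1))} {i j : Fin (d + 1)} :
      Reaches d α i → j ≠ i → Reaches d (α * Equiv.swap i j) j

lemma reaches_apply {d : ℕ} {α : Equiv.Perm (Fin (d + 1))} {i : Fin (d + 1)}
    (h : Reaches d α i) : α i = Fin.last d := by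
  induction h with
  | base => rfl
  | step h hij ih => simpa using ih

/-- If β = α∘(i j) arises from α along an alternated factorization whose
last transposition involved i (or α = id and i the top index), then the j-th component
of x_β equals the last component of x: [x_{α.(i j)}]_j = [x]_{d+1}. -/
theorem stmt15 (d n : ℕ) (α : Equiv.Perm (Fin (d + 1))) (i j : Fin (d + 1))
    (h : Reaches d α i) (hij : j ≠ i) (x : Fin (d + 1) → Fin n) :
    (x ∘ ⇑(α * Equiv.swap i j)) j = x (Fin.last d) := by
  simp [reaches_apply h]
end

section
/- Let Q be a (d−1)-ary relation on {0,…,n−1} and let (T_α, Q_α)_{α ∈ Perm(d)} be a d-simulation of Q, i.e., families of d-ary relations satisfying: (A1) T_id(x) = Q(x⁻) whenever [x]_d = 0; (A2) T_{α.ij}(x) = T_{α.ij}(x_{(ij)}); (A3) T_α(x) = T_{α.ij}(x) whenever [x]_i = 0; (A4) Q_id(x) = Q(x⁻); (A5) Q_{α.ij}(x) = T_{α.ij}(x) whenever [x]_j = 0; (A6) Q_{α.ij}(x) does not depend on [x]_j. Then for every x and every permutation α: Q_α(x_α) = Q(x⁻). -/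
/-- if (T_α, Q_α) is a d-simulation of Q (axioms A1–A6), then
Q_α(x_α) = Q(x⁻) for every tuple x and every permutation α along the chain. -/
theorem stmt16 (d n : ℕ) (hn : 0 < n)
    (Q : (Fin d → Fin n) → Prop)
    (T QF : Equiv.Perm (Fin (d + 1)) → (Fin (d + 1) → Fin n) → Prop)
    (A1 : ∀ x, x (Fin.last d) = ⟨0, hn⟩ → (T 1 x ↔ Q (x ∘ Fin.castSucc)))
    (A2 : ∀ α i j, Reaches d α i → j ≠ i → ∀ x,
      (T (α * Equiv.swap i j) x ↔ T (α * Equiv.swap i j) (x ∘ ⇑(Equiv.swap i j))))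
    (A3 : ∀ α i j, Reaches d α i → j ≠ i → ∀ x, x i = ⟨0, hn⟩ →
      (T α x ↔ T (α * Equiv.swap i j) x))
    (A4 : ∀ x, QF 1 x ↔ Q (x ∘ Fin.castSucc))
    (A5 : ∀ α i j, Reaches d α i → j ≠ i → ∀ x, x j = ⟨0, hn⟩ →
      (QF (α * Equiv.swap i j) x ↔ T (α * Equiv.swap i j) x))
    (A6 : ∀ α i j, Reaches d α i → j ≠ i → ∀ x v,
      (QF (α * Equiv.swap i j) x ↔ QF (α * Equiv.swap i j) (Function.update x j v))) :
    ∀ (x : Fin (d + 1) → Fin n) (α : Equiv.Perm (Fin (d + 1))),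
      (∃ i, Reaches d α i) → (QF α (x ∘ ⇑α) ↔ Q (x ∘ Fin.castSucc)) := by

  have key : ∀ α i, Reaches d α i →
      (α i = Fin.last d ∧ ∀ x : Fin (d+1) → Fin n, x (α i) = ⟨0, hn⟩ →
        (T α (x ∘ ⇑α) ↔ Q (x ∘ Fin.castSucc))) := by
    intro α i h
    induction h with
    | base =>
      refine ⟨rfl, ?_⟩
      intro x hx
      simpa using A1 x (by simpa using hx)
    | @step β i j hβ hji ih =>
      obtain ⟨hlast, ihT⟩ := ih
      constructor
      · simp [Equiv.Perm.mul_apply, Equiv.swap_apply_right, hlast]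
      · intro x hx
        have h1 := A2 β i j hβ hji (x ∘ ⇑(β * Equiv.swap i j))
        have e1 : (x ∘ ⇑(β * Equiv.swap i j)) ∘ ⇑(Equiv.swap i j) = x ∘ ⇑β := by
          ext k; simp [Equiv.Perm.mul_apply]
        have hxi : (x ∘ ⇑β) i = ⟨0, hn⟩ := by
          simpa [Equiv.Perm.mul_apply, Equiv.swap_apply_right] using hx
        have h2 := A3 β i j hβ hji (x ∘ ⇑β) hxi
        rw [e1] at h1
        rw [h1, ← h2]
        exact ihT x hxi
  intro x α ⟨i0, h⟩
  cases h with
  | base => simpa using A4 x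
  | @step β i _ hβ hji =>
    obtain ⟨hlast, -⟩ := key β i hβ
    have hαj : (β * Equiv.swap i i0) i0 = Fin.last d := by
      simp [Equiv.Perm.mul_apply, Equiv.swap_apply_right, hlast]
    set α := β * Equiv.swap i i0 with hα
    set x' := Function.update x (α i0) ⟨0, hn⟩ with hx'
    have hx'αj : x' (α i0) = ⟨0, hn⟩ := Function.update_self _ _ _
    have e2 : Function.update (x ∘ ⇑α) i0 ⟨0, hn⟩ = x' ∘ ⇑α := by
      ext k
      by_cases hk : k = i0
      · subst hk; simp [hx']
      · have hne : α k ≠ α i0 := fun h => hk (α.injective h)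
        simp [hk, hx', Function.update_of_ne, hne]
    have h6 := A6 β i i0 hβ hji (x ∘ ⇑α) ⟨0, hn⟩
    rw [e2] at h6
    have h5 := A5 β i i0 hβ hji (x' ∘ ⇑α) (by simpa using hx'αj)
    have hR : Reaches d α i0 := Reaches.step hβ hji
    have hL := (key α i0 hR).2 x' hx'αj
    have e3 : x' ∘ Fin.castSucc = x ∘ Fin.castSucc := by
      funext k
      have hne : (Fin.castSucc k : Fin (d+1)) ≠ α i0 := by
        rw [hαj]; exact (Fin.castSucc_lt_last k).ne
      exact Function.update_of_ne hne _ _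
    rw [← e3, ← hL, ← h5, ← h6]
end
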